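/- Fix μ > 0, n ≥ 1 and γ₁, …, γₙ > 0. Define the composed density recursively by q₁(x,t) = Q(x;t,μ,γ₁) and q_{k+1}(x,t) = ∫₀^∞ q_k(x,s) Q(s;t,μ,γ_{k+1}) ds, corresponding to the iterated process G¹_{γ₁}(G²_{γ₂}(… Gⁿ_{γₙ}(t) …)). Then for every t > 0 and every real η such that (η−1)/(γ₁γ₂⋯γ_k) + μ > 0 for all 1 ≤ k ≤ n, one has ∫₀^∞ x^(η−1) q_n(x,t) dx = ( ∏_{k=1}^n Γ( (η−1)/(γ₁γ₂⋯γ_k) + μ ) / Γ(μ) ) · t^((η−1)/(γ₁γ₂⋯γₙ)). -/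

import Mathlib

open MeasureTheory Set Real


open MeasureTheory

/-- The generalized Gamma density `Q(x;t,μ,γ) = γ x^(γμ−1) e^(−x^γ/t) / (t^μ Γ(μ))`. -/
noncomputable def Q (x t μ γ : ℝ) : ℝ :=
  γ * x ^ (γ * μ - 1) * Real.exp (-(x ^ γ) / t) / (t ^ μ * Real.Gamma μ)

/-- The composed density of `G¹_{γ₁}(G²_{γ₂}(… Gⁿ_{γₙ}(t) …))`:
`q₁(x,t) = Q(x;t,μ,γ 0)` and `q_{k+1}(x,t) = ∫₀^∞ q_k(x,s) Q(s;t,μ,γ k) ds`. -/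
noncomputable def qGn (μ : ℝ) (γ : ℕ → ℝ) : ℕ → ℝ → ℝ → ℝ
  | 0 => fun x t => Q x t μ (γ 0)
  | (k + 1) => fun x t => ∫ s in Set.Ioi (0:ℝ), qGn μ γ k x s * Q s t μ (γ (k + 1))

lemma Q_pos {x t μ γ : ℝ} (hx : 0 < x) (ht : 0 < t) (hγ : 0 < γ) (hμ : 0 < μ) :
    0 < Q x t μ γ := by
  have hΓ := Real.Gamma_pos_of_pos hμ
  unfold Q; positivity

lemma measurable_Q (μ γ : ℝ) : Measurable fun p : ℝ × ℝ => Q p.1 p.2 μ γ := by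
  unfold Q; fun_prop

lemma integrableOn_rpow_mul_exp_neg_mul_rpow' {p q b : ℝ} (hp : 0 < p) (hq : -1 < q)
    (hb : 0 < b) : IntegrableOn (fun x : ℝ => x ^ q * Real.exp (-b * x ^ p)) (Ioi 0) := by
  set c : ℝ := (q + 1) / p - 1 with hc
  have h1 : IntegrableOn (fun y : ℝ => y ^ c * Real.exp (-b * y)) (Ioi 0) := by
    have := integrableOn_rpow_mul_exp_neg_mul_rpow (p := 1) (s := c) (b := b)
      (by rw [hc]; have : 0 < (q+1)/p := div_pos (by linarith) hp; linarith) one_pos hb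
    exact this.congr_fun (fun x hx => by simp only [Real.rpow_one]) measurableSet_Ioi
  have h2 := (integrableOn_Ioi_comp_rpow_iff' (fun y => y ^ c * Real.exp (-b * y)) hp.ne').mpr h1
  refine h2.congr_fun (fun x hx => ?_) measurableSet_Ioi
  have hx0 : (0:ℝ) < x := hx
  simp only []; rw [smul_eq_mul, ← Real.rpow_mul hx0.le, ← mul_assoc, ← Real.rpow_add hx0]
  congr 2
  rw [hc]
  field_simp; ring


lemma mellinQ_integrable {t μ γ : ℝ} (a : ℝ) (ht : 0 < t) (hμ : 0 < μ) (hγ : 0 < γ)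
    (ha : 0 < a / γ + μ) :
    IntegrableOn (fun x : ℝ => x ^ a * Q x t μ γ) (Ioi 0) := by
  have hq : -1 < a + γ * μ - 1 := by nlinarith [mul_pos hγ ha, mul_div_cancel₀ a hγ.ne']
  have h := ((integrableOn_rpow_mul_exp_neg_mul_rpow' hγ hq (one_div_pos.mpr ht)).const_mul
    (γ / (t ^ μ * Real.Gamma μ)))
  refine (integrableOn_congr_fun (fun x hx => ?_) measurableSet_Ioi).mpr h
  have hx0 : (0:ℝ) < x := hx
  unfold Q
  have hxe : x ^ (a + γ * μ - 1) = x ^ a * x ^ (γ * μ - 1) := by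
    rw [← Real.rpow_add hx0]; congr 1; ring
  rw [hxe, show -(1/t) * x ^ γ = -x ^ γ / t by ring]
  field_simp

lemma mellinQ_value {t μ γ : ℝ} (a : ℝ) (ht : 0 < t) (hμ : 0 < μ) (hγ : 0 < γ)
    (ha : 0 < a / γ + μ) :
    ∫ x in Ioi (0:ℝ), x ^ a * Q x t μ γ
      = Real.Gamma (a / γ + μ) / Real.Gamma μ * t ^ (a / γ) := by
  have hΓ := Real.Gamma_pos_of_pos hμ
  have hq : -1 < a + γ * μ - 1 := by nlinarith [mul_pos hγ ha, mul_div_cancel₀ a hγ.ne']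
  have key : ∫ x in Ioi (0:ℝ), x ^ a * Q x t μ γ
      = (γ / (t ^ μ * Real.Gamma μ)) *
        ∫ x in Ioi (0:ℝ), x ^ (a + γ * μ - 1) * Real.exp (-(1/t) * x ^ γ) := by
    rw [← MeasureTheory.integral_const_mul]
    refine setIntegral_congr_fun measurableSet_Ioi (fun x hx => ?_)
    have hx0 : (0:ℝ) < x := hx
    unfold Q
    have hxe : x ^ (a + γ * μ - 1) = x ^ a * x ^ (γ * μ - 1) := by
      rw [← Real.rpow_add hx0]; congr 1; ring
    rw [hxe, show -(1/t) * x ^ γ = -x ^ γ / t by ring]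
    field_simp
  rw [key, integral_rpow_mul_exp_neg_mul_rpow hγ hq (one_div_pos.mpr ht)]
  have h1 : a + γ * μ - 1 + 1 = γ * (a / γ + μ) := by field_simp; ring
  have h2 : (1/t : ℝ) ^ (-(γ * (a / γ + μ)) / γ) = t ^ (a / γ + μ) := by
    rw [one_div, ← Real.rpow_neg_one t, ← Real.rpow_mul ht.le]
    congr 1
    field_simp
  rw [h1, h2, mul_div_cancel_left₀ _ hγ.ne', Real.rpow_add ht]
  field_simp

noncomputable def qL (μ : ℝ) (γ : ℕ → ℝ) : ℕ → ℝ → ℝ → ENNReal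
  | 0 => fun x t => ENNReal.ofReal (Q x t μ (γ 0))
  | (k + 1) => fun x t =>
      ∫⁻ s in Ioi (0:ℝ), qL μ γ k x s * ENNReal.ofReal (Q s t μ (γ (k + 1)))

lemma measurable_qL (μ : ℝ) (γ : ℕ → ℝ) (k : ℕ) :
    Measurable fun p : ℝ × ℝ => qL μ γ k p.1 p.2 := by
  induction k with
  | zero =>
    exact ENNReal.measurable_ofReal.comp (measurable_Q μ (γ 0))
  | succ k ih =>
    simp only [qL]
    apply Measurable.lintegral_prod_right' (f := fun p : (ℝ × ℝ) × ℝ =>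
      qL μ γ k p.1.1 p.2 * ENNReal.ofReal (Q p.2 p.1.2 μ (γ (k + 1))))
    apply Measurable.mul
    · exact ih.comp ((measurable_fst.comp measurable_fst).prodMk measurable_snd)
    · exact (ENNReal.measurable_ofReal.comp (measurable_Q μ (γ (k+1)))).comp
        (measurable_snd.prodMk (measurable_snd.comp measurable_fst))

lemma measurable_qGn (μ : ℝ) (γ : ℕ → ℝ) (k : ℕ) :
    Measurable fun p : ℝ × ℝ => qGn μ γ k p.1 p.2 := by
  induction k with
  | zero => exact measurable_Q μ (γ 0)
  | succ k ih =>
    simp only [qGn]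
    apply StronglyMeasurable.measurable
    apply MeasureTheory.StronglyMeasurable.integral_prod_right'
      (f := fun p : (ℝ × ℝ) × ℝ => qGn μ γ k p.1.1 p.2 * Q p.2 p.1.2 μ (γ (k + 1)))
    apply Measurable.stronglyMeasurable
    apply Measurable.mul
    · exact ih.comp ((measurable_fst.comp measurable_fst).prodMk measurable_snd)
    · exact ((measurable_Q μ (γ (k+1)))).comp
        (measurable_snd.prodMk (measurable_snd.comp measurable_fst))

set_option maxHeartbeats 1000000 in
lemma key (μ : ℝ) (hμ : 0 < μ) (γ : ℕ → ℝ) (η : ℝ) (n : ℕ)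
    (hγ : ∀ k < n, 0 < γ k)
    (hη : ∀ k, 1 ≤ k → k ≤ n → 0 < (η - 1) / (∏ i ∈ Finset.range k, γ i) + μ)
    (k : ℕ) : k < n →
    (∀ t : ℝ, 0 < t →
      ∫⁻ x in Ioi (0:ℝ), ENNReal.ofReal (x ^ (η - 1)) * qL μ γ k x t
        = ENNReal.ofReal
            ((∏ j ∈ Finset.range (k + 1),
                Real.Gamma ((η - 1) / (∏ i ∈ Finset.range (j + 1), γ i) + μ) / Real.Gamma μ)
              * t ^ ((η - 1) / (∏ i ∈ Finset.range (k + 1), γ i))))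
    ∧ (∀ t : ℝ, 0 < t →
        ∀ᵐ x ∂(volume.restrict (Ioi (0:ℝ))), qGn μ γ k x t = (qL μ γ k x t).toReal) := by
  induction k with
  | zero =>
    intro hk
    have hγ0 : 0 < γ 0 := hγ 0 hk
    have ha : 0 < (η - 1) / (γ 0) + μ := by
      simpa [Finset.prod_range_one] using hη 1 le_rfl hk
    constructor
    · intro t ht
      simp only [qL, Finset.prod_range_one]
      calc ∫⁻ x in Ioi (0:ℝ), ENNReal.ofReal (x ^ (η-1)) * ENNReal.ofReal (Q x t μ (γ 0))
          = ∫⁻ x in Ioi (0:ℝ), ENNReal.ofReal (x ^ (η-1) * Q x t μ (γ 0)) := by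
            refine lintegral_congr_ae ?_
            filter_upwards [ae_restrict_mem measurableSet_Ioi] with x hx
            rw [ENNReal.ofReal_mul (Real.rpow_nonneg (le_of_lt hx) _)]
        _ = ENNReal.ofReal (∫ x in Ioi (0:ℝ), x ^ (η-1) * Q x t μ (γ 0)) := by
            refine (MeasureTheory.ofReal_integral_eq_lintegral_ofReal
              (mellinQ_integrable _ ht hμ hγ0 ha) ?_).symm
            filter_upwards [ae_restrict_mem measurableSet_Ioi] with x hx
            exact mul_nonneg (Real.rpow_nonneg (le_of_lt hx) _) (Q_pos hx ht hγ0 hμ).le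
        _ = _ := by rw [mellinQ_value _ ht hμ hγ0 ha]; simp [Finset.prod_range_one]
    · intro t ht
      filter_upwards [ae_restrict_mem measurableSet_Ioi] with x hx
      simp only [qGn, qL]
      rw [ENNReal.toReal_ofReal (Q_pos hx ht hγ0 hμ).le]
  | succ k ih =>
    intro hk1
    obtain ⟨ihA, ihB⟩ := ih (Nat.lt_of_succ_lt hk1)
    set P : ℝ := ∏ i ∈ Finset.range (k+1), γ i with hP
    set C : ℝ := ∏ j ∈ Finset.range (k+1),
        Real.Gamma ((η-1)/(∏ i ∈ Finset.range (j+1), γ i) + μ) / Real.Gamma μ with hC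
    have hΓμ : 0 < Real.Gamma μ := Real.Gamma_pos_of_pos hμ
    have hγk : 0 < γ (k+1) := hγ (k+1) hk1
    have hPpos : 0 < P := Finset.prod_pos (fun i hi =>
      hγ i (lt_trans (Finset.mem_range.mp hi) hk1))
    have hPn : (∏ i ∈ Finset.range (k+2), γ i) = P * γ (k+1) := Finset.prod_range_succ _ _
    have ha2 : 0 < ((η-1)/P)/γ (k+1) + μ := by
      have h := hη (k+2) (by omega) hk1
      rwa [hPn, ← div_div] at h
    have hCnn : 0 ≤ C := by
      refine Finset.prod_nonneg (fun j hj => div_nonneg ?_ hΓμ.le)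
      exact (Real.Gamma_pos_of_pos (hη (j+1) (by omega)
        (by have := Finset.mem_range.mp hj; omega))).le
    constructor
    · intro t ht
      have hmeas : Measurable fun z : ℝ × ℝ =>
          ENNReal.ofReal (z.1 ^ (η-1)) * qL μ γ k z.1 z.2
            * ENNReal.ofReal (Q z.2 t μ (γ (k+1))) := by
        apply Measurable.mul
        · apply Measurable.mul
          · exact ENNReal.measurable_ofReal.comp (measurable_fst.pow_const _)
          · exact measurable_qL μ γ k
        · exact ENNReal.measurable_ofReal.comp
            (((measurable_Q μ (γ (k+1))).comp (measurable_snd.prodMk measurable_const)))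
      calc ∫⁻ x in Ioi (0:ℝ), ENNReal.ofReal (x ^ (η-1)) * qL μ γ (k+1) x t
          = ∫⁻ x in Ioi (0:ℝ), ∫⁻ s in Ioi (0:ℝ),
              ENNReal.ofReal (x ^ (η-1)) * qL μ γ k x s
                * ENNReal.ofReal (Q s t μ (γ (k+1))) := by
            simp only [qL]
            refine lintegral_congr (fun x => ?_)
            rw [← lintegral_const_mul' _ _ ENNReal.ofReal_ne_top]
            simp_rw [mul_assoc]
        _ = ∫⁻ s in Ioi (0:ℝ), ∫⁻ x in Ioi (0:ℝ),
              ENNReal.ofReal (x ^ (η-1)) * qL μ γ k x s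
                * ENNReal.ofReal (Q s t μ (γ (k+1))) := by
            exact lintegral_lintegral_swap hmeas.aemeasurable
        _ = ∫⁻ s in Ioi (0:ℝ), (∫⁻ x in Ioi (0:ℝ),
              ENNReal.ofReal (x ^ (η-1)) * qL μ γ k x s)
                * ENNReal.ofReal (Q s t μ (γ (k+1))) := by
            refine lintegral_congr (fun s => ?_)
            rw [← lintegral_mul_const' _ _ ENNReal.ofReal_ne_top]
        _ = ∫⁻ s in Ioi (0:ℝ), ENNReal.ofReal
              (C * (s ^ ((η-1)/P) * Q s t μ (γ (k+1)))) := by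
            refine lintegral_congr_ae ?_
            filter_upwards [ae_restrict_mem measurableSet_Ioi] with s hs
            rw [ihA s hs, ← ENNReal.ofReal_mul
              (mul_nonneg hCnn (Real.rpow_nonneg (le_of_lt hs) _)), mul_assoc]
        _ = ENNReal.ofReal (∫ s in Ioi (0:ℝ),
              C * (s ^ ((η-1)/P) * Q s t μ (γ (k+1)))) := by
            refine (MeasureTheory.ofReal_integral_eq_lintegral_ofReal
              ((mellinQ_integrable _ ht hμ hγk ha2).const_mul C) ?_).symm
            filter_upwards [ae_restrict_mem measurableSet_Ioi] with s hs
            exact mul_nonneg hCnn (mul_nonneg (Real.rpow_nonneg (le_of_lt hs) _)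
              (Q_pos hs ht hγk hμ).le)
        _ = _ := by
            rw [MeasureTheory.integral_const_mul, mellinQ_value _ ht hμ hγk ha2]
            congr 1
            rw [Finset.prod_range_succ, hPn, ← div_div]
            ring
    · intro t ht
      have hqLm : Measurable fun z : ℝ × ℝ => qL μ γ k z.2 z.1 :=
        (measurable_qL μ γ k).comp (measurable_snd.prodMk measurable_fst)
      have hmeasSet : MeasurableSet {z : ℝ × ℝ |
          qGn μ γ k z.2 z.1 = (qL μ γ k z.2 z.1).toReal ∧ qL μ γ k z.2 z.1 < ⊤} := by
        apply MeasurableSet.inter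
        · exact measurableSet_eq_fun
            ((measurable_qGn μ γ k).comp (measurable_snd.prodMk measurable_fst))
            hqLm.ennreal_toReal
        · have hset : {z : ℝ × ℝ | qL μ γ k z.2 z.1 < ⊤}
              = (fun z : ℝ × ℝ => qL μ γ k z.2 z.1) ⁻¹' {⊤}ᶜ := by
            ext z; simp [lt_top_iff_ne_top]
          show MeasurableSet {z : ℝ × ℝ | qL μ γ k z.2 z.1 < ⊤}
          rw [hset]
          exact hqLm (measurableSet_singleton ⊤).compl
      have H : ∀ᵐ s ∂(volume.restrict (Ioi (0:ℝ))), ∀ᵐ x ∂(volume.restrict (Ioi (0:ℝ))),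
          (qGn μ γ k x s = (qL μ γ k x s).toReal ∧ qL μ γ k x s < ⊤) := by
        filter_upwards [ae_restrict_mem measurableSet_Ioi] with s hs
        have h1 := ihB s hs
        have hfm : Measurable fun x : ℝ => ENNReal.ofReal (x ^ (η-1)) * qL μ γ k x s := by
          apply Measurable.mul
          · exact ENNReal.measurable_ofReal.comp (measurable_id.pow_const _)
          · exact (measurable_qL μ γ k).comp (measurable_id.prodMk measurable_const)
        have hfin : (∫⁻ x in Ioi (0:ℝ), ENNReal.ofReal (x ^ (η-1)) * qL μ γ k x s) ≠ ⊤ := by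
          rw [ihA s hs]; exact ENNReal.ofReal_ne_top
        have h3 := ae_lt_top hfm hfin
        have h2 : ∀ᵐ x ∂(volume.restrict (Ioi (0:ℝ))), qL μ γ k x s < ⊤ := by
          filter_upwards [h3, ae_restrict_mem measurableSet_Ioi] with x hx hx0
          by_contra hcon
          rw [lt_top_iff_ne_top, not_not] at hcon
          rw [hcon, ENNReal.mul_top (by
            simp only [ne_eq, ENNReal.ofReal_eq_zero, not_le]
            exact Real.rpow_pos_of_pos hx0 _)] at hx
          exact (lt_irrefl _ hx).elim
        filter_upwards [h1, h2] with x hx1 hx2 using ⟨hx1, hx2⟩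
      have H2 := (MeasureTheory.Measure.ae_ae_comm hmeasSet).mp H
      filter_upwards [H2] with x hx
      simp only [qGn, qL]
      have e1 : ∫ s in Ioi (0:ℝ), qGn μ γ k x s * Q s t μ (γ (k+1))
          = ∫ s in Ioi (0:ℝ),
              (qL μ γ k x s * ENNReal.ofReal (Q s t μ (γ (k+1)))).toReal := by
        refine integral_congr_ae ?_
        filter_upwards [hx, ae_restrict_mem measurableSet_Ioi] with s hs hs0
        rw [hs.1, ENNReal.toReal_mul, ENNReal.toReal_ofReal (Q_pos hs0 ht hγk hμ).le]
      rw [e1]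
      refine integral_toReal ?_ ?_
      · exact ((measurable_qL μ γ k).comp (measurable_const.prodMk measurable_id)).mul
          (ENNReal.measurable_ofReal.comp
            ((measurable_Q μ (γ (k+1))).comp (measurable_id.prodMk measurable_const)))
          |>.aemeasurable
      · filter_upwards [hx] with s hs
        exact ENNReal.mul_lt_top hs.2 ENNReal.ofReal_lt_top

/-- the Mellin transform of the density of the iterated process
`G¹_{γ₁}(G²_{γ₂}(… Gⁿ_{γₙ}(t) …))` equals
`(∏ₖ Γ((η−1)/(γ₁⋯γₖ) + μ)/Γ(μ)) · t^((η−1)/(γ₁⋯γₙ))`. -/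
theorem stmt_11 (μ : ℝ) (hμ : 0 < μ) (n : ℕ) (hn : 1 ≤ n) (γ : ℕ → ℝ)
    (hγ : ∀ k < n, 0 < γ k) (t η : ℝ) (ht : 0 < t)
    (hη : ∀ k, 1 ≤ k → k ≤ n → 0 < (η - 1) / (∏ i ∈ Finset.range k, γ i) + μ) :
    (∫ x in Set.Ioi (0:ℝ), x ^ (η - 1) * qGn μ γ (n - 1) x t)
      = (∏ k ∈ Finset.range n,
          Real.Gamma ((η - 1) / (∏ i ∈ Finset.range (k + 1), γ i) + μ) / Real.Gamma μ)
        * t ^ ((η - 1) / (∏ i ∈ Finset.range n, γ i)) := by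
  obtain ⟨kA, kB⟩ := key μ hμ γ η n hγ hη (n - 1) (by omega)
  have hrw : n - 1 + 1 = n := by omega
  rw [hrw] at kA
  have hΓμ : 0 < Real.Gamma μ := Real.Gamma_pos_of_pos hμ
  have hRHS : 0 ≤ (∏ k ∈ Finset.range n,
      Real.Gamma ((η - 1) / (∏ i ∈ Finset.range (k + 1), γ i) + μ) / Real.Gamma μ)
        * t ^ ((η - 1) / (∏ i ∈ Finset.range n, γ i)) := by
    refine mul_nonneg (Finset.prod_nonneg fun j hj => div_nonneg ?_ hΓμ.le)
      (Real.rpow_nonneg ht.le _)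
    exact (Real.Gamma_pos_of_pos (hη (j+1) (by omega)
      (by have := Finset.mem_range.mp hj; omega))).le
  have hm : Measurable fun x : ℝ =>
      ENNReal.ofReal (x ^ (η - 1)) * qL μ γ (n - 1) x t :=
    (ENNReal.measurable_ofReal.comp (measurable_id.pow_const _)).mul
      ((measurable_qL μ γ (n - 1)).comp (measurable_id.prodMk measurable_const))
  calc ∫ x in Ioi (0:ℝ), x ^ (η - 1) * qGn μ γ (n - 1) x t
      = ∫ x in Ioi (0:ℝ), (ENNReal.ofReal (x ^ (η - 1)) * qL μ γ (n - 1) x t).toReal := by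
        refine integral_congr_ae ?_
        filter_upwards [kB t ht, ae_restrict_mem measurableSet_Ioi] with x h1 h2
        rw [h1, ENNReal.toReal_mul, ENNReal.toReal_ofReal (Real.rpow_nonneg (le_of_lt h2) _)]
    _ = (∫⁻ x in Ioi (0:ℝ), ENNReal.ofReal (x ^ (η - 1)) * qL μ γ (n - 1) x t).toReal := by
        refine integral_toReal hm.aemeasurable ?_
        exact ae_lt_top hm (by rw [kA t ht]; exact ENNReal.ofReal_ne_top)
    _ = _ := by rw [kA t ht, ENNReal.toReal_ofReal hRHS]
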